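/- arXiv:1204.3232 — 2 statements merged into one kernel-verified Lean document; each statement's English description precedes it below -/
import Mathlib

section
/- For K ≥ K' and all u ≥ 0 in the common domain, and N ≤ N' in [2,∞], the comparison drifts satisfy Ψ_{K,N}(u) ≤ Ψ_{K',N'}(u), where Ψ_{K,N}(u) = -2K t_{K/(N-1)}(u/2) for N < ∞ and Ψ_{K,∞}(u) = -Ku. -/
open Real ENNReal

noncomputable def sK (K θ : ℝ) : ℝ :=
  if 0 < K then Real.sin (Real.sqrt K * θ) / Real.sqrt K
  else if K = 0 then θ
  else Real.sinh (Real.sqrt (-K) * θ) / Real.sqrt (-K)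

noncomputable def cK (K θ : ℝ) : ℝ :=
  if 0 < K then Real.cos (Real.sqrt K * θ)
  else if K = 0 then 1
  else Real.cosh (Real.sqrt (-K) * θ)

noncomputable def tK (K θ : ℝ) : ℝ := sK K θ / cK K θ

/-- The comparison drift `Ψ_{K,N}`, with `N ∈ [2,∞]` encoded as `ℝ≥0∞`. -/
noncomputable def Psi (K : ℝ) (N : ℝ≥0∞) (u : ℝ) : ℝ :=
  if N = ⊤ then -K * u else -2 * K * tK (K / (N.toReal - 1)) (u / 2)

section AuxReal

open Set

/-- `s * sin t ≤ t * sin s` for `0 ≤ s ≤ t ≤ π` (concavity of `sin`). -/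
private lemma aux_mul_sin_le {s t : ℝ} (hs : 0 ≤ s) (hst : s ≤ t) (ht : t ≤ π) :
    s * Real.sin t ≤ t * Real.sin s := by
  rcases eq_or_lt_of_le (hs.trans hst) with h | htpos
  · have hs0 : s = 0 := le_antisymm (hst.trans h.symm.le) hs
    simp [← h, hs0]
  · have hmem0 : (0 : ℝ) ∈ Icc (0 : ℝ) π := ⟨le_refl _, Real.pi_pos.le⟩
    have hmemt : t ∈ Icc (0 : ℝ) π := ⟨htpos.le, ht⟩
    have hab : (1 - s / t) + s / t = 1 := by ring
    have ha : 0 ≤ 1 - s / t := by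
      have : s / t ≤ 1 := (div_le_one htpos).2 hst
      linarith
    have hb : 0 ≤ s / t := div_nonneg hs htpos.le
    have := strictConcaveOn_sin_Icc.concaveOn.2 hmem0 hmemt ha hb hab
    simp only [smul_eq_mul, mul_zero, Real.sin_zero, zero_add] at this
    rw [div_mul_cancel₀ _ htpos.ne'] at this
    -- this : (1 - s/t) * 0 + s/t * sin t ≤ sin s
    have h2 : s / t * Real.sin t ≤ Real.sin s := by linarith
    rw [div_mul_eq_mul_div, div_le_iff₀ htpos] at h2
    linarith [h2]

private lemma aux_convexOn_sinh : ConvexOn ℝ (Ici (0 : ℝ)) Real.sinh := by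
  apply convexOn_of_deriv2_nonneg (convex_Ici 0) Real.continuous_sinh.continuousOn
    Real.differentiable_sinh.differentiableOn
  · rw [Real.deriv_sinh]
    exact Real.differentiable_cosh.differentiableOn
  · intro x _
    have : deriv^[2] Real.sinh x = Real.sinh x := by
      simp [Function.iterate_succ, Real.deriv_sinh, Real.deriv_cosh]
    rw [this]
    rw [interior_Ici] at *
    exact Real.sinh_nonneg_iff.2 (le_of_lt (by assumption))

/-- `t * sinh s ≤ s * sinh t` for `0 ≤ s ≤ t` (convexity of `sinh`). -/
private lemma aux_mul_sinh_le {s t : ℝ} (hs : 0 ≤ s) (hst : s ≤ t) :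
    t * Real.sinh s ≤ s * Real.sinh t := by
  rcases eq_or_lt_of_le (hs.trans hst) with h | htpos
  · have hs0 : s = 0 := le_antisymm (hst.trans h.symm.le) hs
    simp [← h, hs0]
  · have hmem0 : (0 : ℝ) ∈ Ici (0 : ℝ) := Set.self_mem_Ici
    have hmemt : t ∈ Ici (0 : ℝ) := Set.mem_Ici.2 htpos.le
    have hab : (1 - s / t) + s / t = 1 := by ring
    have ha : 0 ≤ 1 - s / t := by
      have : s / t ≤ 1 := (div_le_one htpos).2 hst
      linarith
    have hb : 0 ≤ s / t := div_nonneg hs htpos.le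
    have := aux_convexOn_sinh.2 hmem0 hmemt ha hb hab
    simp only [smul_eq_mul, mul_zero, Real.sinh_zero, zero_add] at this
    rw [div_mul_cancel₀ _ htpos.ne'] at this
    -- this : sinh s ≤ (1 - s/t) * 0 + s/t * sinh t
    have h2 : Real.sinh s ≤ s / t * Real.sinh t := by linarith
    rw [div_mul_eq_mul_div, le_div_iff₀ htpos] at h2
    linarith [h2]

/-- `sinh x ≤ x * cosh x` for `0 ≤ x`. -/
private lemma aux_sinh_le_mul_cosh {x : ℝ} (hx : 0 ≤ x) :
    Real.sinh x ≤ x * Real.cosh x := by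
  have hmono : MonotoneOn (fun y => y * Real.cosh y - Real.sinh y) (Ici (0 : ℝ)) := by
    have hder : ∀ y : ℝ, HasDerivAt (fun z => z * Real.cosh z - Real.sinh z)
        (y * Real.sinh y) y := by
      intro y
      have h1 : HasDerivAt (fun z => z * Real.cosh z - Real.sinh z)
          (1 * Real.cosh y + y * Real.sinh y - Real.cosh y) y :=
        ((hasDerivAt_id y).mul (Real.hasDerivAt_cosh y)).sub (Real.hasDerivAt_sinh y)
      convert h1 using 1
      ring
    apply monotoneOn_of_deriv_nonneg (convex_Ici 0)
    · exact (Continuous.sub (continuous_id.mul Real.continuous_cosh)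
        Real.continuous_sinh).continuousOn
    · intro y _
      exact (hder y).differentiableAt.differentiableWithinAt
    · intro y hy
      rw [interior_Ici, mem_Ioi] at hy
      rw [(hder y).deriv]
      exact mul_nonneg hy.le (Real.sinh_nonneg_iff.2 hy.le)
  have := hmono (self_mem_Ici) (mem_Ici.2 hx) hx
  simpa using this

/-- monотone: `b * tan a ≤ a * tan b` for `0 < a ≤ b < π/2`. -/
private lemma aux_tan_ratio {a b : ℝ} (ha : 0 < a) (hab : a ≤ b) (hb : b < π / 2) :
    b * (Real.sin a / Real.cos a) ≤ a * (Real.sin b / Real.cos b) := by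
  have hca : 0 < Real.cos a :=
    Real.cos_pos_of_mem_Ioo ⟨by linarith [Real.pi_pos], by linarith⟩
  have hcb : 0 < Real.cos b :=
    Real.cos_pos_of_mem_Ioo ⟨by linarith [Real.pi_pos], hb⟩
  rw [mul_div_assoc', mul_div_assoc', div_le_div_iff₀ hca hcb]
  -- goal : b * sin a * cos b ≤ a * sin b * cos a
  have key := aux_mul_sin_le (s := b - a) (t := a + b) (by linarith) (by linarith)
    (by linarith [Real.pi_pos])
  rw [Real.sin_add, Real.sin_sub] at key
  nlinarith [key]

/-- antitone: `a * tanh b ≤ b * tanh a` for `0 ≤ a ≤ b`. -/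
private lemma aux_tanh_ratio {a b : ℝ} (ha : 0 ≤ a) (hab : a ≤ b) :
    a * (Real.sinh b / Real.cosh b) ≤ b * (Real.sinh a / Real.cosh a) := by
  have hca := Real.cosh_pos a
  have hcb := Real.cosh_pos b
  rw [mul_div_assoc', mul_div_assoc', div_le_div_iff₀ hcb hca]
  -- goal : a * sinh b * cosh a ≤ b * sinh a * cosh b
  have key := aux_mul_sinh_le (s := b - a) (t := a + b) (by linarith) (by linarith)
  rw [Real.sinh_add, Real.sinh_sub] at key
  nlinarith [key]

end AuxReal

section TKLemmas

private lemma tK_of_pos {κ θ : ℝ} (h : 0 < κ) :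
    tK κ θ = Real.sin (Real.sqrt κ * θ) / Real.sqrt κ / Real.cos (Real.sqrt κ * θ) := by
  simp [tK, sK, cK, h]

private lemma tK_of_neg {κ θ : ℝ} (h : κ < 0) :
    tK κ θ = Real.sinh (Real.sqrt (-κ) * θ) / Real.sqrt (-κ) /
      Real.cosh (Real.sqrt (-κ) * θ) := by
  simp [tK, sK, cK, not_lt.2 h.le, h.ne]

private lemma tK_zero (θ : ℝ) : tK 0 θ = θ := by simp [tK, sK, cK]

private lemma mul_tK_of_pos {κ θ : ℝ} (h : 0 < κ) :
    κ * tK κ θ = Real.sqrt κ *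
      (Real.sin (Real.sqrt κ * θ) / Real.cos (Real.sqrt κ * θ)) := by
  have hx : (0 : ℝ) < Real.sqrt κ := Real.sqrt_pos.2 h
  have hκ : Real.sqrt κ * Real.sqrt κ = κ := Real.mul_self_sqrt h.le
  rw [tK_of_pos h]
  have hdiv : κ / Real.sqrt κ = Real.sqrt κ := by
    rw [div_eq_iff hx.ne']; exact hκ.symm
  rw [show κ * (Real.sin (Real.sqrt κ * θ) / Real.sqrt κ / Real.cos (Real.sqrt κ * θ))
      = (κ / Real.sqrt κ) *
        (Real.sin (Real.sqrt κ * θ) / Real.cos (Real.sqrt κ * θ)) from by ring, hdiv]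

private lemma mul_tK_of_neg {κ θ : ℝ} (h : κ < 0) :
    κ * tK κ θ = -(Real.sqrt (-κ) *
      (Real.sinh (Real.sqrt (-κ) * θ) / Real.cosh (Real.sqrt (-κ) * θ))) := by
  have hx : (0 : ℝ) < Real.sqrt (-κ) := Real.sqrt_pos.2 (by linarith)
  have hκ : Real.sqrt (-κ) * Real.sqrt (-κ) = -κ := Real.mul_self_sqrt (by linarith)
  rw [tK_of_neg h]
  rw [show κ * (Real.sinh (Real.sqrt (-κ) * θ) / Real.sqrt (-κ) /
        Real.cosh (Real.sqrt (-κ) * θ))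
      = (κ / Real.sqrt (-κ)) *
        (Real.sinh (Real.sqrt (-κ) * θ) / Real.cosh (Real.sqrt (-κ) * θ)) from by ring]
  have hdiv : κ / Real.sqrt (-κ) = -Real.sqrt (-κ) := by
    rw [div_eq_iff hx.ne']; nlinarith [hκ]
  rw [hdiv]
  ring

private lemma g_nonneg {κ θ : ℝ} (hθ : 0 ≤ θ) (hκ : 0 ≤ κ)
    (hdom : 0 < κ → Real.sqrt κ * θ < π / 2) : 0 ≤ κ * tK κ θ := by
  rcases eq_or_lt_of_le hκ with h | h
  · simp [← h]
  · rw [mul_tK_of_pos h]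
    have hy : 0 ≤ Real.sqrt κ * θ := mul_nonneg (Real.sqrt_nonneg _) hθ
    have hy2 := hdom h
    have hcos : 0 < Real.cos (Real.sqrt κ * θ) :=
      Real.cos_pos_of_mem_Ioo ⟨by linarith [Real.pi_pos], hy2⟩
    have hsin : 0 ≤ Real.sin (Real.sqrt κ * θ) :=
      Real.sin_nonneg_of_nonneg_of_le_pi hy (by linarith [Real.pi_pos])
    positivity

private lemma g_nonpos {κ θ : ℝ} (hθ : 0 ≤ θ) (hκ : κ ≤ 0) : κ * tK κ θ ≤ 0 := by
  rcases eq_or_lt_of_le hκ with h | h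
  · simp [h]
  · rw [mul_tK_of_neg h]
    have hy : 0 ≤ Real.sqrt (-κ) * θ := mul_nonneg (Real.sqrt_nonneg _) hθ
    have hsinh : 0 ≤ Real.sinh (Real.sqrt (-κ) * θ) := Real.sinh_nonneg_iff.2 hy
    have hcosh := Real.cosh_pos (Real.sqrt (-κ) * θ)
    have : 0 ≤ Real.sqrt (-κ) *
        (Real.sinh (Real.sqrt (-κ) * θ) / Real.cosh (Real.sqrt (-κ) * θ)) := by positivity
    linarith

/-- Monotonicity of `κ ↦ κ * tK κ θ`. -/
private lemma g_mono {θ κ1 κ2 : ℝ} (hθ : 0 ≤ θ) (h12 : κ1 ≤ κ2)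
    (hdom : 0 < κ2 → Real.sqrt κ2 * θ < π / 2) :
    κ1 * tK κ1 θ ≤ κ2 * tK κ2 θ := by
  rcases lt_or_ge 0 κ1 with h1 | h1
  · -- both positive
    have h2 : 0 < κ2 := lt_of_lt_of_le h1 h12
    rw [mul_tK_of_pos h1, mul_tK_of_pos h2]
    set y1 := Real.sqrt κ1 * θ with hy1
    set y2 := Real.sqrt κ2 * θ with hy2
    have hyle : y1 ≤ y2 :=
      mul_le_mul_of_nonneg_right (Real.sqrt_le_sqrt h12) hθ
    have hy1n : 0 ≤ y1 := mul_nonneg (Real.sqrt_nonneg _) hθ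
    have hy2lt : y2 < π / 2 := hdom h2
    have hc1 : 0 < Real.cos y1 :=
      Real.cos_pos_of_mem_Ioo ⟨by linarith [Real.pi_pos], by linarith⟩
    have hc2 : 0 < Real.cos y2 :=
      Real.cos_pos_of_mem_Ioo ⟨by linarith [Real.pi_pos], hy2lt⟩
    have hs1 : 0 ≤ Real.sin y1 :=
      Real.sin_nonneg_of_nonneg_of_le_pi hy1n (by linarith [Real.pi_pos])
    have htan : Real.sin y1 / Real.cos y1 ≤ Real.sin y2 / Real.cos y2 := by
      rw [div_le_div_iff₀ hc1 hc2]
      have := Real.sin_nonneg_of_nonneg_of_le_pi (x := y2 - y1) (by linarith)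
        (by linarith [Real.pi_pos])
      rw [Real.sin_sub] at this
      linarith
    exact mul_le_mul (Real.sqrt_le_sqrt h12) htan (div_nonneg hs1 hc1.le)
      (Real.sqrt_nonneg _)
  · rcases lt_or_ge 0 κ2 with h2 | h2
    · exact le_trans (g_nonpos hθ h1) (g_nonneg hθ h2.le hdom)
    · rcases eq_or_lt_of_le h12 with heq | hlt
      · rw [heq]
      rcases eq_or_lt_of_le h2 with h2e | h2l
      · rw [h2e]
        simpa using g_nonpos hθ h1
      · -- both negative
        have h1n : κ1 < 0 := lt_of_lt_of_le hlt h2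
        rw [mul_tK_of_neg h1n, mul_tK_of_neg h2l]
        set x1 := Real.sqrt (-κ1) with hx1
        set x2 := Real.sqrt (-κ2) with hx2
        have hxle : x2 ≤ x1 := Real.sqrt_le_sqrt (by linarith)
        have hx2n : 0 ≤ x2 := Real.sqrt_nonneg _
        have hyle : x2 * θ ≤ x1 * θ := mul_le_mul_of_nonneg_right hxle hθ
        have hy2n : 0 ≤ x2 * θ := mul_nonneg hx2n hθ
        have htanh : Real.sinh (x2 * θ) / Real.cosh (x2 * θ) ≤
            Real.sinh (x1 * θ) / Real.cosh (x1 * θ) := by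
          rw [div_le_div_iff₀ (Real.cosh_pos _) (Real.cosh_pos _)]
          have : (0:ℝ) ≤ Real.sinh (x1 * θ - x2 * θ) :=
            Real.sinh_nonneg_iff.2 (by linarith)
          rw [Real.sinh_sub] at this
          linarith
        have hth2 : 0 ≤ Real.sinh (x2 * θ) / Real.cosh (x2 * θ) :=
          div_nonneg (Real.sinh_nonneg_iff.2 hy2n) (Real.cosh_pos _).le
        have := mul_le_mul hxle htanh hth2 (Real.sqrt_nonneg _)
        linarith

/-- Monotonicity in `K`: `K' ≤ K` implies `K' * tK (K'/m) θ ≤ K * tK (K/m) θ`. -/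
private lemma key_Kmono {K K' m θ : ℝ} (hm : 0 < m) (hθ : 0 ≤ θ) (hK : K' ≤ K)
    (hdom : 0 < K → Real.sqrt (K / m) * θ < π / 2) :
    K' * tK (K' / m) θ ≤ K * tK (K / m) θ := by
  have h12 : K' / m ≤ K / m := by gcongr
  have hdom' : 0 < K / m → Real.sqrt (K / m) * θ < π / 2 := by
    intro h
    have hKpos : 0 < K := by
      rcases div_pos_iff.1 h with ⟨h1, _⟩ | ⟨_, h2⟩
      · exact h1
      · linarith
    exact hdom hKpos
  have hg := g_mono hθ h12 hdom'
  have := mul_le_mul_of_nonneg_left hg hm.le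
  have e : ∀ A x : ℝ, m * (A / m * x) = A * x := by
    intro A x; field_simp
  rwa [e, e] at this

/-- `K * θ ≤ K * tK (K/m) θ`: comparison with the linear drift. -/
private lemma key_linear {K m θ : ℝ} (hm : 0 < m) (hθ : 0 ≤ θ)
    (hdom : 0 < K → Real.sqrt (K / m) * θ < π / 2) :
    K * θ ≤ K * tK (K / m) θ := by
  rcases lt_trichotomy K 0 with hK | hK | hK
  · -- K < 0 : tK ≤ θ
    have hκ : K / m < 0 := div_neg_of_neg_of_pos hK hm
    apply mul_le_mul_of_nonpos_left _ hK.le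
    rw [tK_of_neg hκ]
    set x := Real.sqrt (-(K / m)) with hx
    have hxpos : 0 < x := Real.sqrt_pos.2 (by linarith)
    have hcosh := Real.cosh_pos (x * θ)
    rw [div_div, div_le_iff₀ (by positivity)]
    have := aux_sinh_le_mul_cosh (x := x * θ) (by positivity)
    nlinarith [this]
  · simp [hK]
  · -- K > 0 : θ ≤ tK
    have hκ : 0 < K / m := by positivity
    apply mul_le_mul_of_nonneg_left _ hK.le
    rw [tK_of_pos hκ]
    set x := Real.sqrt (K / m) with hx
    have hxpos : 0 < x := Real.sqrt_pos.2 hκ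
    have hy2 : x * θ < π / 2 := hdom hK
    have hxy0 : 0 ≤ x * θ := by positivity
    have hcos : 0 < Real.cos (x * θ) :=
      Real.cos_pos_of_mem_Ioo ⟨by linarith [Real.pi_pos], hy2⟩
    rw [div_div, le_div_iff₀ (by positivity)]
    rcases eq_or_lt_of_le hθ with h0 | h0
    · simp [← h0]
    · have hxy : 0 < x * θ := by positivity
      have := Real.lt_tan hxy hy2
      rw [Real.tan_eq_sin_div_cos, lt_div_iff₀ hcos] at this
      nlinarith [this]

/-- Monotonicity in `N`: `m ≤ m'` implies `K * tK (K/m') θ ≤ K * tK (K/m) θ`. -/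
private lemma key_Nmono {K m m' θ : ℝ} (hm : 0 < m) (hmm' : m ≤ m') (hθ : 0 ≤ θ)
    (hdom : 0 < K → Real.sqrt (K / m) * θ < π / 2) :
    K * tK (K / m') θ ≤ K * tK (K / m) θ := by
  have hm' : 0 < m' := lt_of_lt_of_le hm hmm'
  rcases eq_or_lt_of_le hθ with h0 | h0
  · -- θ = 0 : both sides are 0
    have hz : ∀ κ : ℝ, tK κ 0 = 0 := by
      intro κ
      rcases lt_trichotomy κ 0 with h | h | h
      · rw [tK_of_neg h]; simp
      · rw [h, tK_zero]
      · rw [tK_of_pos h]; simp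
    rw [← h0, hz, hz]
  rcases lt_trichotomy K 0 with hK | hK | hK
  · -- K < 0
    have hκ : K / m < 0 := div_neg_of_neg_of_pos hK hm
    have hκ' : K / m' < 0 := div_neg_of_neg_of_pos hK hm'
    apply mul_le_mul_of_nonpos_left _ hK.le
    -- need : tK (K/m) θ ≤ tK (K/m') θ
    rw [tK_of_neg hκ, tK_of_neg hκ']
    set x1 := Real.sqrt (-(K / m)) with hx1
    set x2 := Real.sqrt (-(K / m')) with hx2
    have hx1p : 0 < x1 := Real.sqrt_pos.2 (by linarith)
    have hx2p : 0 < x2 := Real.sqrt_pos.2 (by linarith)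
    have hxle : x2 ≤ x1 := Real.sqrt_le_sqrt (by
      rw [neg_le_neg_iff, div_le_div_iff₀ hm hm']
      exact mul_le_mul_of_nonpos_left hmm' hK.le)
    have hyle : x2 * θ ≤ x1 * θ := mul_le_mul_of_nonneg_right hxle h0.le
    have hrat := aux_tanh_ratio (a := x2 * θ) (b := x1 * θ) (by positivity) hyle
    -- hrat : x2θ * tanh(x1θ) ≤ x1θ * tanh(x2θ)
    rw [div_div, div_div, div_le_div_iff₀ (by positivity) (by positivity)]
    -- sinh(x1θ)/ (x1 cosh(x1θ)) ≤ sinh(x2θ)/(x2 cosh(x2θ))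
    set T1 := Real.sinh (x1 * θ) / Real.cosh (x1 * θ) with hT1
    set T2 := Real.sinh (x2 * θ) / Real.cosh (x2 * θ) with hT2
    have hc1 := Real.cosh_pos (x1 * θ)
    have hc2 := Real.cosh_pos (x2 * θ)
    have e1 : Real.sinh (x1 * θ) = T1 * Real.cosh (x1 * θ) := by
      rw [hT1]; field_simp
    have e2 : Real.sinh (x2 * θ) = T2 * Real.cosh (x2 * θ) := by
      rw [hT2]; field_simp
    rw [e1, e2]
    -- goal : T1 * cosh(x1θ) * (x2 * cosh(x2θ)) ≤ T2 * cosh(x2θ) * (x1 * cosh(x1θ))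
    have hkey : x2 * T1 ≤ x1 * T2 := by
      have h2 : θ * (x2 * T1) ≤ θ * (x1 * T2) := by nlinarith [hrat]
      exact le_of_mul_le_mul_left h2 h0
    nlinarith [hkey, mul_pos hc1 hc2]
  · simp [hK]
  · -- K > 0
    have hκ : 0 < K / m := by positivity
    have hκ' : 0 < K / m' := by positivity
    apply mul_le_mul_of_nonneg_left _ hK.le
    -- need : tK (K/m') θ ≤ tK (K/m) θ
    rw [tK_of_pos hκ, tK_of_pos hκ']
    set x1 := Real.sqrt (K / m) with hx1
    set x2 := Real.sqrt (K / m') with hx2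
    have hx1p : 0 < x1 := Real.sqrt_pos.2 hκ
    have hx2p : 0 < x2 := Real.sqrt_pos.2 hκ'
    have hxle : x2 ≤ x1 := Real.sqrt_le_sqrt (by
      rw [div_le_div_iff₀ hm' hm]
      exact mul_le_mul_of_nonneg_left hmm' hK.le)
    have hyle : x2 * θ ≤ x1 * θ := mul_le_mul_of_nonneg_right hxle h0.le
    have hy1lt : x1 * θ < π / 2 := hdom hK
    have hy2pos : 0 < x2 * θ := by positivity
    have hrat := aux_tan_ratio (a := x2 * θ) (b := x1 * θ) hy2pos hyle hy1lt
    have hc1 : 0 < Real.cos (x1 * θ) :=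
      Real.cos_pos_of_mem_Ioo ⟨by linarith [Real.pi_pos], hy1lt⟩
    have hc2 : 0 < Real.cos (x2 * θ) :=
      Real.cos_pos_of_mem_Ioo ⟨by linarith [Real.pi_pos], by linarith⟩
    rw [div_div, div_div, div_le_div_iff₀ (by positivity) (by positivity)]
    set T1 := Real.sin (x1 * θ) / Real.cos (x1 * θ) with hT1
    set T2 := Real.sin (x2 * θ) / Real.cos (x2 * θ) with hT2
    have e1 : Real.sin (x1 * θ) = T1 * Real.cos (x1 * θ) := by
      rw [hT1]; field_simp
    have e2 : Real.sin (x2 * θ) = T2 * Real.cos (x2 * θ) := by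
      rw [hT2]; field_simp
    rw [e1, e2]
    have hkey : x1 * T2 ≤ x2 * T1 := by
      have h2 : θ * (x1 * T2) ≤ θ * (x2 * T1) := by nlinarith [hrat]
      exact le_of_mul_le_mul_left h2 h0
    nlinarith [hkey, mul_pos hc1 hc2]

end TKLemmas

theorem Psi_monotone_comparison (K K' : ℝ) (N N' : ℝ≥0∞)
    (hKK' : K' ≤ K) (hN : (2 : ℝ≥0∞) ≤ N) (hNN' : N ≤ N') (u : ℝ) (hu : 0 ≤ u)
    (hdom : 0 < K → N ≠ ⊤ → u < Real.pi * Real.sqrt ((N.toReal - 1) / K)) :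
    Psi K N u ≤ Psi K' N' u := by
  by_cases hNtop : N = ⊤
  · have hN'top : N' = ⊤ := by
      rw [hNtop] at hNN'
      exact top_le_iff.1 hNN'
    rw [Psi, Psi, if_pos hNtop, if_pos hN'top]
    nlinarith [mul_le_mul_of_nonneg_right hKK' hu]
  · -- N finite
    have hn2 : (2 : ℝ) ≤ N.toReal := by
      have := ENNReal.toReal_mono hNtop hN
      simpa using this
    set m : ℝ := N.toReal - 1 with hmdef
    have hm : 0 < m := by simp only [hmdef]; linarith
    set θ : ℝ := u / 2 with hθdef
    have hθ : 0 ≤ θ := by positivity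
    have hdom' : 0 < K → Real.sqrt (K / m) * θ < π / 2 := by
      intro hK
      have hKm : 0 < K / m := by positivity
      have hmK : 0 < m / K := by positivity
      have hsq : Real.sqrt (K / m) * Real.sqrt (m / K) = 1 := by
        rw [← Real.sqrt_mul hKm.le]
        rw [show K / m * (m / K) = 1 from by field_simp]
        exact Real.sqrt_one
      have hu2 : u < π * Real.sqrt (m / K) := hdom hK hNtop
      have h1 : Real.sqrt (K / m) * θ <
          Real.sqrt (K / m) * (π * Real.sqrt (m / K) / 2) := by
        apply mul_lt_mul_of_pos_left _ (Real.sqrt_pos.2 hKm)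
        rw [hθdef]; linarith
      have h2 : Real.sqrt (K / m) * (π * Real.sqrt (m / K) / 2) = π / 2 := by
        rw [show Real.sqrt (K / m) * (π * Real.sqrt (m / K) / 2)
            = π / 2 * (Real.sqrt (K / m) * Real.sqrt (m / K)) from by ring, hsq, mul_one]
      linarith
    have hdomK' : 0 < K' → Real.sqrt (K' / m) * θ < π / 2 := by
      intro hK'
      have hK : 0 < K := lt_of_lt_of_le hK' hKK'
      have hle : Real.sqrt (K' / m) ≤ Real.sqrt (K / m) :=
        Real.sqrt_le_sqrt ((div_le_div_iff_of_pos_right hm).2 hKK')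
      calc Real.sqrt (K' / m) * θ ≤ Real.sqrt (K / m) * θ :=
            mul_le_mul_of_nonneg_right hle hθ
        _ < π / 2 := hdom' hK
    have hKmono := key_Kmono (K := K) (K' := K') hm hθ hKK' hdom'
    by_cases hN'top : N' = ⊤
    · rw [Psi, Psi, if_neg hNtop, if_pos hN'top]
      have hlin := key_linear (K := K') hm hθ hdomK'
      have hgoal : -2 * K * tK (K / m) θ ≤ -K' * u := by
        have hu2θ : u = 2 * θ := by rw [hθdef]; ring
        rw [hu2θ]
        linarith [hKmono, hlin]
      rw [← hmdef, ← hθdef]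
      exact hgoal
    · -- both finite
      have hnn' : N.toReal ≤ N'.toReal := ENNReal.toReal_mono hN'top hNN'
      set m' : ℝ := N'.toReal - 1 with hm'def
      have hmm' : m ≤ m' := by simp only [hmdef, hm'def]; linarith
      rw [Psi, Psi, if_neg hNtop, if_neg hN'top]
      have hNmono := key_Nmono (K := K') hm hmm' hθ hdomK'
      rw [← hmdef, ← hm'def, ← hθdef]
      linarith [hKmono, hNmono]
end

section
/- Let (M,d) be a compact metric space, and let c_n : M × M → [0,∞) be continuous functions converging pointwise and monotonically nondecreasingly to a continuous c. Then for any Borel probability measures μ, ν on M, the optimal transportation costs converge: lim_{n→∞} T_{c_n}(μ,ν) = T_c(μ,ν), where T_c(μ,ν) = inf over couplings π of μ and ν of ∫ c dπ. -/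
open MeasureTheory Filter

/-- The optimal transportation cost between `μ` and `ν` for cost `c`. -/
noncomputable def transportCost {M : Type*} [MeasurableSpace M]
    (c : M × M → ℝ) (μ ν : Measure M) : ℝ :=
  sInf {x : ℝ | ∃ π : Measure (M × M), IsProbabilityMeasure π ∧
    π.map Prod.fst = μ ∧ π.map Prod.snd = ν ∧ x = ∫ p, c p ∂π}

theorem transportCost_tendsto_of_monotone
    {M : Type*} [MetricSpace M] [CompactSpace M] [MeasurableSpace M]
    [BorelSpace M]
    (c : ℕ → M × M → ℝ) (climit : M × M → ℝ)
    (hcont : ∀ n, Continuous (c n)) (hclim : Continuous climit)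
    (hnonneg : ∀ n p, 0 ≤ c n p)
    (hmono : ∀ n p, c n p ≤ c (n + 1) p)
    (hptwise : ∀ p, Tendsto (fun n => c n p) atTop (nhds (climit p)))
    (μ ν : Measure M) [IsProbabilityMeasure μ] [IsProbabilityMeasure ν] :
    Tendsto (fun n => transportCost (c n) μ ν) atTop
      (nhds (transportCost climit μ ν)) := by
  -- monotone in n
  have hmono' : ∀ p, Monotone fun n => c n p := fun p =>
    monotone_nat_of_le_succ fun n => hmono n p
  -- c n ≤ climit
  have hle : ∀ n p, c n p ≤ climit p := fun n p =>
    ge_of_tendsto (hptwise p) (eventually_atTop.2 ⟨n, fun m hm => hmono' p hm⟩)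
  have hclim_nonneg : ∀ p, 0 ≤ climit p := fun p => le_trans (hnonneg 0 p) (hle 0 p)
  -- integrability of any continuous function wrt any finite measure on compact space
  have hint : ∀ (f : M × M → ℝ), Continuous f → ∀ (π : Measure (M × M)),
      IsProbabilityMeasure π → Integrable f π := by
    intro f hf π hπ
    exact hf.integrable_of_hasCompactSupport (HasCompactSupport.of_compactSpace f)
  -- the set of attainable costs
  set S : (M × M → ℝ) → Set ℝ := fun f =>
    {x : ℝ | ∃ π : Measure (M × M), IsProbabilityMeasure π ∧
      π.map Prod.fst = μ ∧ π.map Prod.snd = ν ∧ x = ∫ p, f p ∂π} with hS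
  have hne : ∀ f : M × M → ℝ, (S f).Nonempty := by
    intro f
    refine ⟨∫ p, f p ∂(μ.prod ν), μ.prod ν, inferInstance, ?_, ?_, rfl⟩
    · simp
    · simp
  have hbdd : ∀ f : M × M → ℝ, (∀ p, 0 ≤ f p) → BddBelow (S f) := by
    intro f hf
    refine ⟨0, fun x hx => ?_⟩
    obtain ⟨π, hπ, -, -, rfl⟩ := hx
    exact integral_nonneg hf
  -- `T (c n) ≤ T climit` for every n
  have hTle : ∀ n, transportCost (c n) μ ν ≤ transportCost climit μ ν := by
    intro n
    refine le_csInf (hne climit) ?_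
    rintro y ⟨π, hπ, h1, h2, rfl⟩
    refine csInf_le_of_le (hbdd _ (hnonneg n)) ⟨π, hπ, h1, h2, rfl⟩ ?_
    exact integral_mono (hint _ (hcont n) π hπ) (hint _ hclim π hπ) fun p => hle n p
  -- Dini-type uniform lower bound
  have hdini : ∀ ε : ℝ, 0 < ε → ∃ N : ℕ, ∀ n ≥ N, ∀ p, climit p - c n p < ε := by
    intro ε hε
    set U : ℕ → Set (M × M) := fun n => {p | climit p - c n p < ε} with hU
    have hUopen : ∀ n, IsOpen (U n) :=
      fun n => isOpen_lt (hclim.sub (hcont n)) continuous_const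
    have hcover : Set.univ ⊆ ⋃ n, U n := by
      intro p _
      have : Tendsto (fun n => climit p - c n p) atTop (nhds 0) := by
        have h := tendsto_const_nhds (x := climit p) (f := atTop (α := ℕ)) |>.sub (hptwise p)
        simpa using h
      obtain ⟨n, hn⟩ := ((this.eventually (gt_mem_nhds hε)).exists)
      exact Set.mem_iUnion.2 ⟨n, hn⟩
    obtain ⟨t, ht⟩ := isCompact_univ.elim_finite_subcover U hUopen hcover
    refine ⟨t.sup id, fun n hn p => ?_⟩
    obtain ⟨i, hi, hp⟩ := Set.mem_iUnion₂.1 (ht (Set.mem_univ p))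
    have hiN : i ≤ n := le_trans (Finset.le_sup (f := id) hi) hn
    calc climit p - c n p ≤ climit p - c i p := by
          have := hmono' p hiN; linarith
      _ < ε := hp
  rw [Metric.tendsto_atTop]
  intro ε hε
  obtain ⟨N, hN⟩ := hdini (ε / 2) (by linarith)
  refine ⟨N, fun n hn => ?_⟩
  -- `T climit ≤ T (c n) + ε/2`
  have key : transportCost climit μ ν ≤ transportCost (c n) μ ν + ε / 2 := by
    have : transportCost climit μ ν - ε / 2 ≤ transportCost (c n) μ ν := by
      refine le_csInf (hne (c n)) ?_
      rintro x ⟨π, hπ, h1, h2, rfl⟩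
      have h3 : ∫ p, climit p ∂π ≤ (∫ p, c n p ∂π) + ε / 2 := by
        have : ∫ p, climit p ∂π ≤ ∫ p, (c n p + ε / 2) ∂π := by
          refine integral_mono (hint _ hclim π hπ)
            (((hint _ (hcont n) π hπ)).add (integrable_const _)) fun p => ?_
          have := hN n hn p; linarith
        rwa [integral_add (hint _ (hcont n) π hπ) (integrable_const _),
          integral_const, probReal_univ, one_smul] at this
      have h4 : transportCost climit μ ν ≤ ∫ p, climit p ∂π :=
        csInf_le (hbdd _ hclim_nonneg) ⟨π, hπ, h1, h2, rfl⟩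
      linarith
    linarith
  have habs : |transportCost (c n) μ ν - transportCost climit μ ν| ≤ ε / 2 := by
    rw [abs_le]
    constructor <;> [linarith [key]; linarith [hTle n]]
  calc dist (transportCost (c n) μ ν) (transportCost climit μ ν)
      = |transportCost (c n) μ ν - transportCost climit μ ν| := Real.dist_eq _ _
    _ ≤ ε / 2 := habs
    _ < ε := by linarith
end
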